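/- arXiv:1509.09072 — 3 statements merged into one kernel-verified Lean document; each statement's English description precedes it below -/
import Mathlib

section
/- Let (a_k)_{k≥0} be a sequence of real numbers with a₀ ≥ a₁ ≥ a₂ ≥ ⋯ > 0 and a := Σ_{j≥0} a_j < ∞. Then for any δ > 0 there exist a function v : ℝ → ℝ, infinitely differentiable with compact support, and a constant M > 0, such that v ≥ 0 everywhere, ∫_ℝ v(x) dx = 1, the support of v is contained in [0,a], and |v^{(k)}(x)| ≤ M δ^k (a₀ a₁ ⋯ a_k)^{-1} for all k ∈ ℕ and all x ∈ ℝ. -/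
open Set

open Set MeasureTheory intervalIntegral Filter Topology

noncomputable def Sm (β : ℝ) (f : ℝ → ℝ) : ℝ → ℝ := fun x => (∫ t in (x - β)..x, f t) / β

lemma Sm_cont {β : ℝ} {f : ℝ → ℝ} (hβ : 0 < β)
    (hf : ∀ r s : ℝ, IntervalIntegrable f volume r s) : Continuous (Sm β f) := by
  have key : ∀ x : ℝ, Sm β f x =
      ((∫ t in (0:ℝ)..x, f t) - ∫ t in (0:ℝ)..(x - β), f t) / β := by
    intro x
    have h := integral_add_adjacent_intervals (hf 0 (x - β)) (hf (x - β) x)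
    unfold Sm
    rw [← h]; ring
  have hc : Continuous fun u : ℝ => ∫ t in (0:ℝ)..u, f t :=
    intervalIntegral.continuous_primitive hf 0
  have : Continuous fun x : ℝ =>
      ((∫ t in (0:ℝ)..x, f t) - ∫ t in (0:ℝ)..(x - β), f t) / β :=
    (hc.sub (hc.comp (continuous_id.sub continuous_const))).div_const β
  exact (funext key ▸ this : Continuous (Sm β f))

lemma Sm_nonneg {β : ℝ} {f : ℝ → ℝ} (hβ : 0 < β) (h0 : ∀ x, 0 ≤ f x) :
    ∀ x, 0 ≤ Sm β f x := by
  intro x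
  apply div_nonneg _ hβ.le
  exact intervalIntegral.integral_nonneg (by linarith) (fun u _ => h0 u)

lemma Sm_bound {β : ℝ} {f : ℝ → ℝ} (hβ : 0 < β) {C : ℝ} (hC : ∀ x, |f x| ≤ C) :
    ∀ x, |Sm β f x| ≤ C := by
  intro x
  have h : ‖∫ t in (x - β)..x, f t‖ ≤ C * |x - (x - β)| :=
    intervalIntegral.norm_integral_le_of_norm_le_const (fun t _ => hC t)
  have hxx : |x - (x - β)| = β := by rw [abs_of_pos]; ring; linarith
  rw [hxx] at h
  unfold Sm
  rw [abs_div, abs_of_pos hβ]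
  rw [div_le_iff₀ hβ]
  simpa [Real.norm_eq_abs, mul_comm] using h

lemma Sm_zero {β : ℝ} {f : ℝ → ℝ} (hβ : 0 < β) {L : ℝ}
    (hL : ∀ x, x ∉ Icc 0 L → f x = 0) :
    ∀ x, x ∉ Icc 0 (L + β) → Sm β f x = 0 := by
  intro x hx
  have : ∫ t in (x - β)..x, f t = ∫ t in (x - β)..x, (0:ℝ) := by
    apply intervalIntegral.integral_congr
    intro t ht
    rw [uIcc_of_le (by linarith)] at ht
    apply hL
    intro htL
    apply hx
    constructor
    · linarith [ht.2, htL.1]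
    · linarith [ht.1, htL.2]
  unfold Sm
  rw [this]; simp

lemma Sm_eq_conv {β : ℝ} (f : ℝ → ℝ) (hβ : 0 < β) (x : ℝ) :
    Sm β f x = convolution ((Ioc 0 β).indicator (fun _ => β⁻¹)) f
      (ContinuousLinearMap.lsmul ℝ ℝ) volume x := by
  unfold convolution Sm
  have h1 : ∀ t : ℝ, (ContinuousLinearMap.lsmul ℝ ℝ)
      ((Ioc 0 β).indicator (fun _ => β⁻¹) t) (f (x - t)) =
      (Ioc 0 β).indicator (fun t => β⁻¹ * f (x - t)) t := by
    intro t
    simp only [ContinuousLinearMap.lsmul_apply, smul_eq_mul]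
    rw [Set.indicator_mul_left]
  simp only [h1]
  rw [MeasureTheory.integral_indicator measurableSet_Ioc]
  rw [← intervalIntegral.integral_of_le hβ.le]
  rw [intervalIntegral.integral_const_mul]
  have h2 : ∫ t in (0:ℝ)..β, f (x - t) = ∫ t in (x - β)..x, f t := by
    have := intervalIntegral.integral_comp_sub_left (a := 0) (b := β) f x
    simpa using this
  rw [h2, div_eq_inv_mul]

lemma Sm_integral {β : ℝ} {f : ℝ → ℝ} (hβ : 0 < β) (hf : Integrable f volume) :
    ∫ x, Sm β f x = ∫ x, f x := by
  have hker : Integrable ((Ioc 0 β).indicator (fun _ : ℝ => β⁻¹)) volume := by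
    rw [integrable_indicator_iff measurableSet_Ioc]
    exact integrableOn_const (by simp [Real.volume_Ioc])
  have h := MeasureTheory.integral_convolution (μ := volume) (ν := volume)
    (ContinuousLinearMap.lsmul ℝ ℝ) hker hf
  have hkint : ∫ t : ℝ, (Ioc 0 β).indicator (fun _ => β⁻¹) t = 1 := by
    rw [integral_indicator_const _ measurableSet_Ioc]
    simp [Real.volume_Ioc, ENNReal.toReal_ofReal hβ.le]
    try field_simp
    exact max_eq_left hβ.le
  calc ∫ x, Sm β f x
      = ∫ x, convolution ((Ioc 0 β).indicator (fun _ => β⁻¹)) f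
          (ContinuousLinearMap.lsmul ℝ ℝ) volume x := by
        congr 1; funext x; exact Sm_eq_conv f hβ x
    _ = (ContinuousLinearMap.lsmul ℝ ℝ)
          (∫ t : ℝ, (Ioc 0 β).indicator (fun _ => β⁻¹) t) (∫ x, f x) := h
    _ = ∫ x, f x := by rw [hkint]; simp

lemma Sm_hasDerivAt {β : ℝ} {f : ℝ → ℝ} (hβ : 0 < β) (hcont : Continuous f) :
    ∀ x, HasDerivAt (Sm β f) ((f x - f (x - β)) / β) x := by
  intro x
  have hG : ∀ y : ℝ, HasDerivAt (fun u => ∫ t in (0:ℝ)..u, f t) (f y) y := by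
    intro y
    exact (intervalIntegral.integral_hasStrictDerivAt_right
      (hcont.intervalIntegrable 0 y)
      (hcont.stronglyMeasurable.stronglyMeasurableAtFilter)
      hcont.continuousAt).hasDerivAt
  have key : Sm β f = fun x =>
      ((∫ t in (0:ℝ)..x, f t) - ∫ t in (0:ℝ)..(x - β), f t) / β := by
    funext y
    have h := integral_add_adjacent_intervals
      (hcont.intervalIntegrable (μ := volume) 0 (y - β)) (hcont.intervalIntegrable (μ := volume) (y - β) y)
    unfold Sm; rw [← h]; ring
  rw [key]
  have h2 : HasDerivAt (fun u : ℝ => ∫ t in (0:ℝ)..(u - β), f t) (f (x - β)) x := by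
    have := (hG (x - β)).comp x ((hasDerivAt_id x).sub_const β)
    simpa [Function.comp_def] using this
  exact ((hG x).sub h2).div_const β

lemma Sm_of_deriv {β : ℝ} {f f' : ℝ → ℝ} (hβ : 0 < β)
    (hf : ∀ x, HasDerivAt f (f' x) x) (hcont : Continuous f') :
    ∀ x, (f x - f (x - β)) / β = Sm β f' x := by
  intro x
  have h := intervalIntegral.integral_eq_sub_of_hasDerivAt
    (f := f) (f' := f') (a := x - β) (b := x)
    (fun t _ => hf t) (hcont.intervalIntegrable _ _)
  unfold Sm
  rw [h]

lemma Sm_sub_self {β : ℝ} {f f' : ℝ → ℝ} (hβ : 0 < β) {C : ℝ}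
    (hf : ∀ x, HasDerivAt f (f' x) x) (hC : ∀ x, |f' x| ≤ C) :
    ∀ x, |Sm β f x - f x| ≤ C * β := by
  intro x
  have hC0 : 0 ≤ C := le_trans (abs_nonneg _) (hC 0)
  have hfc : Continuous f := by
    have : Differentiable ℝ f := fun y => (hf y).differentiableAt
    exact this.continuous
  have hlip : ∀ t : ℝ, |f t - f x| ≤ C * |t - x| := by
    intro t
    have := Convex.norm_image_sub_le_of_norm_hasDerivWithin_le
      (f := f) (f' := f') (s := Set.univ) (C := C)
      (fun y _ => (hf y).hasDerivWithinAt) (fun y _ => hC y) convex_univ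
      (Set.mem_univ x) (Set.mem_univ t)
    simpa [Real.norm_eq_abs] using this
  have key : Sm β f x - f x = (∫ t in (x - β)..x, (f t - f x)) / β := by
    rw [intervalIntegral.integral_sub (hfc.intervalIntegrable _ _)
      (intervalIntegrable_const)]
    rw [intervalIntegral.integral_const]
    unfold Sm
    field_simp
    simp only [smul_eq_mul]; ring
  rw [key]
  have hb : ‖∫ t in (x - β)..x, (f t - f x)‖ ≤ (C * β) * |x - (x - β)| := by
    apply intervalIntegral.norm_integral_le_of_norm_le_const
    intro t ht
    rw [Set.uIoc_of_le (by linarith : x - β ≤ x)] at ht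
    have h1 : |t - x| ≤ β := by
      rw [abs_le]; constructor <;> [linarith [ht.1]; linarith [ht.2]]
    calc ‖f t - f x‖ = |f t - f x| := rfl
      _ ≤ C * |t - x| := hlip t
      _ ≤ C * β := by apply mul_le_mul_of_nonneg_left h1 hC0
  have hxx : |x - (x - β)| = β := by rw [abs_of_pos]; ring; linarith
  rw [hxx] at hb
  rw [abs_div, abs_of_pos hβ, div_le_iff₀ hβ]
  calc |∫ t in (x - β)..x, (f t - f x)| ≤ C * β * β := hb
    _ = C * β * β := rfl

noncomputable def gs (b : ℕ → ℝ) : ℕ → ℝ → ℝ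
  | 0 => Set.indicator (Ico 0 (b 0)) (fun _ => (b 0)⁻¹)
  | (n+1) => Sm (b (n+1)) (gs b n)

noncomputable def Bb (b : ℕ → ℝ) (k : ℕ) : ℝ :=
  2 ^ k / (b 0 * ∏ i ∈ Finset.range k, b (i + 2))

noncomputable def sb (b : ℕ → ℝ) (n : ℕ) : ℝ := ∑ i ∈ Finset.range (n + 1), b i

def HInv (b : ℕ → ℝ) (n : ℕ) : Prop :=
  (∀ j, j < n → Continuous (iteratedDeriv j (gs b n))) ∧
  (∀ j x, j + 1 < n →
    HasDerivAt (iteratedDeriv j (gs b n)) (iteratedDeriv (j + 1) (gs b n) x) x) ∧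
  (∀ j x, j < n → |iteratedDeriv j (gs b n) x| ≤ Bb b j) ∧
  (∀ x, x ∉ Icc 0 (sb b n) → gs b n x = 0) ∧
  (∀ x, 0 ≤ gs b n x) ∧
  (∫ x, gs b n x) = 1

section Core
variable {b : ℕ → ℝ}

lemma Bb_pos (hb : ∀ i, 0 < b i) (k : ℕ) : 0 < Bb b k := by
  apply div_pos (by positivity)
  exact mul_pos (hb 0) (Finset.prod_pos (fun i _ => hb (i + 2)))

lemma g0_integrable : Integrable (gs b 0) volume := by
  show Integrable (Set.indicator (Ico 0 (b 0)) (fun _ => (b 0)⁻¹)) volume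
  rw [integrable_indicator_iff measurableSet_Ico]
  exact integrableOn_const (by simp [Real.volume_Ico])

lemma hinv_one (hb : ∀ i, 0 < b i) : HInv b 1 := by
  have hb1 : 0 < b 1 := hb 1
  have hb0 : 0 < b 0 := hb 0
  have hii : ∀ r s : ℝ, IntervalIntegrable (gs b 0) volume r s :=
    fun r s => (g0_integrable (b := b)).intervalIntegrable
  have h0bd : ∀ x, |gs b 0 x| ≤ Bb b 0 := by
    intro x
    show |Set.indicator (Ico 0 (b 0)) (fun _ => (b 0)⁻¹) x| ≤ Bb b 0
    have : Bb b 0 = (b 0)⁻¹ := by simp [Bb]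
    rw [this]
    by_cases hx : x ∈ Ico (0:ℝ) (b 0)
    · rw [Set.indicator_of_mem hx]; rw [abs_of_pos (by positivity)]
    · rw [Set.indicator_of_notMem hx]; simp [le_of_lt (by positivity : (0:ℝ) < (b 0)⁻¹)]
  have h0supp : ∀ x, x ∉ Icc 0 (sb b 0) → gs b 0 x = 0 := by
    intro x hx
    show Set.indicator (Ico 0 (b 0)) (fun _ => (b 0)⁻¹) x = 0
    apply Set.indicator_of_notMem
    intro hmem
    exact hx ⟨hmem.1, by simpa [sb] using le_of_lt hmem.2⟩
  refine ⟨?_, ?_, ?_, ?_, ?_, ?_⟩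
  · intro j hj
    interval_cases j
    rw [iteratedDeriv_zero]
    exact Sm_cont hb1 hii
  · intro j x hj; omega
  · intro j x hj
    interval_cases j
    rw [iteratedDeriv_zero]
    exact Sm_bound hb1 h0bd x
  · intro x hx
    have : sb b 1 = sb b 0 + b 1 := by simp [sb, Finset.sum_range_succ]
    exact Sm_zero hb1 h0supp x (by rwa [← this])
  · intro x
    apply Sm_nonneg hb1
    intro y
    show 0 ≤ Set.indicator (Ico 0 (b 0)) (fun _ => (b 0)⁻¹) y
    apply Set.indicator_nonneg
    intro _ _; positivity
  · show (∫ x, Sm (b 1) (gs b 0) x) = 1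
    rw [Sm_integral hb1 g0_integrable]
    show (∫ x, Set.indicator (Ico 0 (b 0)) (fun _ => (b 0)⁻¹) x) = 1
    rw [integral_indicator_const _ measurableSet_Ico]
    simp [Real.volume_Ico, ENNReal.toReal_ofReal hb0.le]
    field_simp
    exact max_eq_left hb0.le

lemma comm_S (hb : ∀ i, 0 < b i) {m : ℕ} (h : HInv b (m + 1)) :
    ∀ j, j ≤ m → iteratedDeriv j (gs b (m + 2)) =
      Sm (b (m + 2)) (iteratedDeriv j (gs b (m + 1))) := by
  obtain ⟨hcont, hder, _, _, _, _⟩ := h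
  intro j hj
  induction j with
  | zero =>
    rw [iteratedDeriv_zero, iteratedDeriv_zero]
    rfl
  | succ j ih =>
    have hj' : j ≤ m := by omega
    have hjlt : j < m + 1 := by omega
    have hj1lt : j + 1 < m + 1 := by omega
    rw [iteratedDeriv_succ, ih hj']
    funext x
    have hd := Sm_hasDerivAt (hb (m + 2)) (hcont j hjlt) x
    rw [hd.deriv]
    exact Sm_of_deriv (hb (m + 2)) (fun y => hder j y hj1lt) (hcont (j + 1) hj1lt) x

lemma hinv_succ (hb : ∀ i, 0 < b i) {m : ℕ} (h : HInv b (m + 1)) : HInv b (m + 2) := by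
  have hβ : 0 < b (m + 2) := hb (m + 2)
  obtain ⟨hcont, hder, hbd, hsupp, hnn, hint⟩ := h
  have hcomm := comm_S hb ⟨hcont, hder, hbd, hsupp, hnn, hint⟩
  -- top derivative formula
  have htop : iteratedDeriv (m + 1) (gs b (m + 2)) = fun x =>
      (iteratedDeriv m (gs b (m + 1)) x - iteratedDeriv m (gs b (m + 1)) (x - b (m + 2)))
        / b (m + 2) := by
    rw [iteratedDeriv_succ, hcomm m le_rfl]
    funext x
    exact (Sm_hasDerivAt hβ (hcont m (by omega)) x).deriv
  have htopc : Continuous (iteratedDeriv (m + 1) (gs b (m + 2))) := by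
    rw [htop]
    have hc := hcont m (by omega)
    exact ((hc.sub (hc.comp (continuous_id.sub continuous_const))).div_const _)
  refine ⟨?_, ?_, ?_, ?_, ?_, ?_⟩
  · intro j hj
    rcases Nat.lt_succ_iff_lt_or_eq.1 hj with hj' | hj'
    · rw [hcomm j (by omega)]
      exact Sm_cont hβ ((hcont j hj').intervalIntegrable (μ := volume))
    · rw [hj']; exact htopc
  · intro j x hj
    have hjm : j ≤ m := by omega
    rw [hcomm j hjm]
    have hd := Sm_hasDerivAt hβ (hcont j (by omega)) x
    rcases Nat.lt_succ_iff_lt_or_eq.1 hj with hj' | hj'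
    · -- j + 1 ≤ m
      have hj1 : j + 1 ≤ m := by omega
      rw [hcomm (j + 1) hj1]
      rw [← Sm_of_deriv hβ (fun y => hder j y (by omega)) (hcont (j + 1) (by omega)) x]
      exact hd
    · -- j + 1 = m + 1
      have hjm' : j = m := by omega
      subst hjm'
      rw [htop]
      exact hd
  · intro j x hj
    rcases Nat.lt_succ_iff_lt_or_eq.1 hj with hj' | hj'
    · rw [hcomm j (by omega)]
      exact Sm_bound hβ (fun y => hbd j y hj') x
    · rw [hj', htop]
      have h1 : |iteratedDeriv m (gs b (m + 1)) x| ≤ Bb b m := hbd m x (by omega)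
      have h2 : |iteratedDeriv m (gs b (m + 1)) (x - b (m + 2))| ≤ Bb b m :=
        hbd m _ (by omega)
      have hBB : Bb b (m + 1) = (Bb b m + Bb b m) / b (m + 2) := by
        have hP : (0:ℝ) < ∏ i ∈ Finset.range m, b (i + 2) :=
          Finset.prod_pos (fun i _ => hb (i + 2))
        simp only [Bb, Finset.prod_range_succ]
        rw [← add_div]
        field_simp
        ring
      rw [hBB]
      have h3 : |iteratedDeriv m (gs b (m + 1)) x -
          iteratedDeriv m (gs b (m + 1)) (x - b (m + 2))| ≤ Bb b m + Bb b m := by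
        rw [sub_eq_add_neg]
        refine (abs_add_le _ _).trans ?_
        rw [abs_neg]
        exact add_le_add h1 h2
      rw [abs_div, abs_of_pos hβ]
      gcongr
  · intro x hx
    have hs : sb b (m + 2) = sb b (m + 1) + b (m + 2) := by
      simp [sb, Finset.sum_range_succ]
    exact Sm_zero hβ hsupp x (by rwa [← hs])
  · exact Sm_nonneg hβ hnn
  · show (∫ x, Sm (b (m + 2)) (gs b (m + 1)) x) = 1
    rw [Sm_integral hβ ?_]
    · exact hint
    · apply Continuous.integrable_of_hasCompactSupport
      · have := hcont 0 (by omega); rwa [iteratedDeriv_zero] at this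
      · exact HasCompactSupport.intro isCompact_Icc hsupp


lemma hinv_all (hb : ∀ i, 0 < b i) : ∀ n, 1 ≤ n → HInv b n := by
  intro n hn
  induction n with
  | zero => omega
  | succ m ih =>
    rcases Nat.eq_or_lt_of_le hn with h | h
    · rw [← h]; exact hinv_one hb
    · have hm : 1 ≤ m := by omega
      have := ih hm
      obtain ⟨m', rfl⟩ : ∃ m', m = m' + 1 := ⟨m - 1, by omega⟩
      exact hinv_succ hb this

lemma step_dist (hb : ∀ i, 0 < b i) {j n : ℕ} (hjn : j + 2 ≤ n) (x : ℝ) :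
    |iteratedDeriv j (gs b (n + 1)) x - iteratedDeriv j (gs b n) x| ≤
      Bb b (j + 1) * b (n + 1) := by
  obtain ⟨m, rfl⟩ : ∃ m, n = m + 1 := ⟨n - 1, by omega⟩
  obtain ⟨hcont, hder, hbd, _, _, _⟩ := hinv_all hb (m + 1) (by omega)
  rw [comm_S hb (hinv_all hb (m + 1) (by omega)) j (by omega)]
  exact Sm_sub_self (hb (m + 2)) (fun y => hder j y (by omega))
    (fun y => hbd (j + 1) y (by omega)) x

noncomputable def Vlim (b : ℕ → ℝ) (k : ℕ) : ℝ → ℝ :=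
  fun x => (∑' i : ℕ, (iteratedDeriv k (gs b (k + 2 + (i + 1))) x -
      iteratedDeriv k (gs b (k + 2 + i)) x)) + iteratedDeriv k (gs b (k + 2)) x

lemma Vlim_TU (hb : ∀ i, 0 < b i) (hsb : Summable b) (k : ℕ) :
    TendstoUniformly (fun N x => iteratedDeriv k (gs b (k + 2 + N)) x)
      (Vlim b k) atTop := by
  set f : ℕ → ℝ → ℝ := fun i => iteratedDeriv k (gs b (k + 2 + i)) with hf
  have hu : Summable (fun i => Bb b (k + 1) * b (k + 2 + i + 1)) := by
    have : Summable (fun i => b (i + (k + 3))) := (summable_nat_add_iff (k + 3)).2 hsb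
    have h2 : Summable (fun i => b (k + 2 + i + 1)) := by
      apply this.congr; intro i; congr 1; omega
    exact h2.mul_left _
  have hbound : ∀ (i : ℕ) (x : ℝ), ‖f (i + 1) x - f i x‖ ≤ Bb b (k + 1) * b (k + 2 + i + 1) := by
    intro i x
    have := step_dist hb (j := k) (n := k + 2 + i) (by omega) x
    simpa [Real.norm_eq_abs, hf, ← add_assoc] using this
  have htsum := tendstoUniformly_tsum_nat hu hbound
  have hc : TendstoUniformly (fun (_ : ℕ) => f 0) (f 0) atTop :=
    fun u hu' => Filter.Eventually.of_forall (fun N x => refl_mem_uniformity hu')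
  have hadd := htsum.add hc
  have hfam : (fun (N : ℕ) (x : ℝ) => f N x) = fun N x =>
      (∑ i ∈ Finset.range N, (f (i + 1) x - f i x)) + f 0 x := by
    funext N x
    rw [Finset.sum_range_sub (fun i => f i x)]
    ring
  have hgoal : TendstoUniformly (fun N x => f N x) (Vlim b k) atTop := by
    rw [hfam]
    exact hadd
  exact hgoal

lemma Vlim_tendsto (hb : ∀ i, 0 < b i) (hsb : Summable b) (k : ℕ) (x : ℝ) :
    Tendsto (fun N => iteratedDeriv k (gs b (k + 2 + N)) x) atTop (𝓝 (Vlim b k x)) :=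
  (Vlim_TU hb hsb k).tendsto_at x

lemma Vlim_hasDerivAt (hb : ∀ i, 0 < b i) (hsb : Summable b) (k : ℕ) (x : ℝ) :
    HasDerivAt (Vlim b k) (Vlim b (k + 1) x) x := by
  apply hasDerivAt_of_tendstoUniformly (l := (atTop : Filter ℕ))
    (f := fun N x => iteratedDeriv k (gs b (k + 3 + N)) x)
    (f' := fun N x => iteratedDeriv (k + 1) (gs b (k + 3 + N)) x)
  · have := Vlim_TU hb hsb (k + 1)
    have e : ∀ N, k + 1 + 2 + N = k + 3 + N := fun N => by omega
    simpa only [e] using this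
  · apply Filter.Eventually.of_forall
    intro N y
    obtain ⟨hcont, hder, _, _, _, _⟩ := hinv_all hb (k + 3 + N) (by omega)
    exact hder k y (by omega)
  · intro y
    have := (tendsto_add_atTop_iff_nat 1).2 (Vlim_tendsto hb hsb k y)
    have e : ∀ N, k + 2 + (N + 1) = k + 3 + N := fun N => by omega
    simpa only [e] using this

lemma Vlim_cont (hb : ∀ i, 0 < b i) (hsb : Summable b) (k : ℕ) :
    Continuous (Vlim b k) := by
  apply (Vlim_TU hb hsb k).continuous
  apply Filter.Frequently.of_forall
  intro N
  obtain ⟨hcont, _, _, _, _, _⟩ := hinv_all hb (k + 2 + N) (by omega)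
  exact hcont k (by omega)

lemma Vlim_bound (hb : ∀ i, 0 < b i) (hsb : Summable b) (k : ℕ) (x : ℝ) :
    |Vlim b k x| ≤ Bb b k := by
  apply le_of_tendsto (Vlim_tendsto hb hsb k x).abs
  apply Filter.Eventually.of_forall
  intro N
  obtain ⟨_, _, hbd, _, _, _⟩ := hinv_all hb (k + 2 + N) (by omega)
  exact hbd k x (by omega)

lemma Vlim_zero_tendsto (hb : ∀ i, 0 < b i) (hsb : Summable b) (x : ℝ) :
    Tendsto (fun N => gs b (2 + N) x) atTop (𝓝 (Vlim b 0 x)) := by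
  have := Vlim_tendsto hb hsb 0 x
  simpa [iteratedDeriv_zero] using this

lemma Vlim_nonneg (hb : ∀ i, 0 < b i) (hsb : Summable b) (x : ℝ) :
    0 ≤ Vlim b 0 x := by
  apply ge_of_tendsto (Vlim_zero_tendsto hb hsb x)
  apply Filter.Eventually.of_forall
  intro N
  obtain ⟨_, _, _, _, hnn, _⟩ := hinv_all hb (2 + N) (by omega)
  exact hnn x

lemma sb_le_tsum (hb : ∀ i, 0 < b i) (hsb : Summable b) (n : ℕ) :
    sb b n ≤ ∑' i, b i :=
  Summable.sum_le_tsum _ (fun i _ => (hb i).le) hsb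

lemma Vlim_supp (hb : ∀ i, 0 < b i) (hsb : Summable b) (x : ℝ)
    (hx : x ∉ Icc 0 (∑' i, b i)) : Vlim b 0 x = 0 := by
  apply tendsto_nhds_unique (Vlim_zero_tendsto hb hsb x)
  have : ∀ N : ℕ, gs b (2 + N) x = 0 := by
    intro N
    obtain ⟨_, _, _, hsupp, _, _⟩ := hinv_all hb (2 + N) (by omega)
    apply hsupp
    intro hmem
    exact hx ⟨hmem.1, hmem.2.trans (sb_le_tsum hb hsb _)⟩
  simp only [this]
  exact tendsto_const_nhds

lemma Vlim_integral (hb : ∀ i, 0 < b i) (hsb : Summable b) :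
    (∫ x, Vlim b 0 x) = 1 := by
  have hmeas : ∀ N : ℕ, AEStronglyMeasurable (fun x => gs b (2 + N) x) volume := by
    intro N
    obtain ⟨hcont, _, _, _, _, _⟩ := hinv_all hb (2 + N) (by omega)
    have := hcont 0 (by omega)
    rw [iteratedDeriv_zero] at this
    exact this.aestronglyMeasurable
  have hbound : Integrable ((Icc (0:ℝ) (∑' i, b i)).indicator fun _ => Bb b 0) volume := by
    rw [integrable_indicator_iff measurableSet_Icc]
    exact integrableOn_const (by simp [Real.volume_Icc])
  have htend := MeasureTheory.tendsto_integral_of_dominated_convergence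
    (F := fun N x => gs b (2 + N) x) (f := Vlim b 0)
    (μ := volume) _ hmeas hbound ?_ ?_
  · have hconst : ∀ N : ℕ, (∫ x, gs b (2 + N) x) = 1 := by
      intro N
      obtain ⟨_, _, _, _, _, hint⟩ := hinv_all hb (2 + N) (by omega)
      exact hint
    have : Tendsto (fun N : ℕ => (1:ℝ)) atTop (𝓝 (∫ x, Vlim b 0 x)) := by
      simpa only [hconst] using htend
    exact tendsto_nhds_unique this tendsto_const_nhds
  · intro N
    apply Filter.Eventually.of_forall
    intro x
    obtain ⟨_, _, hbd, hsupp, _, _⟩ := hinv_all hb (2 + N) (by omega)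
    by_cases hx : x ∈ Icc (0:ℝ) (∑' i, b i)
    · rw [Set.indicator_of_mem hx]
      have := hbd 0 x (by omega)
      rw [iteratedDeriv_zero] at this
      simpa [Real.norm_eq_abs] using this
    · rw [Set.indicator_of_notMem hx]
      have h0 : gs b (2 + N) x = 0 := by
        apply hsupp
        intro hmem
        exact hx ⟨hmem.1, hmem.2.trans (sb_le_tsum hb hsb _)⟩
      simp [h0]
  · exact Filter.Eventually.of_forall (fun x => Vlim_zero_tendsto hb hsb x)

lemma Vlim_deriv (hb : ∀ i, 0 < b i) (hsb : Summable b) (k : ℕ) :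
    deriv (Vlim b k) = Vlim b (k + 1) :=
  funext fun x => (Vlim_hasDerivAt hb hsb k x).deriv

lemma Vlim_contDiff (hb : ∀ i, 0 < b i) (hsb : Summable b) :
    ∀ (m k : ℕ), ContDiff ℝ (m : ℕ) (Vlim b k) := by
  intro m
  induction m with
  | zero =>
    intro k
    exact contDiff_zero.2 (Vlim_cont hb hsb k)
  | succ m ih =>
    intro k
    have hcast : ((m + 1 : ℕ) : WithTop ℕ∞) = (m : ℕ) + 1 := by push_cast; ring
    rw [hcast, contDiff_succ_iff_deriv]
    refine ⟨fun x => (Vlim_hasDerivAt hb hsb k x).differentiableAt, ?_, ?_⟩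
    · intro h
      exact absurd h (by simp)
    · rw [Vlim_deriv hb hsb k]
      exact ih (k + 1)

lemma Vlim_iteratedDeriv (hb : ∀ i, 0 < b i) (hsb : Summable b) (k : ℕ) :
    iteratedDeriv k (Vlim b 0) = Vlim b k := by
  induction k with
  | zero => rw [iteratedDeriv_zero]
  | succ k ih => rw [iteratedDeriv_succ, ih, Vlim_deriv hb hsb]

theorem core_exists (hb : ∀ i, 0 < b i) (hsb : Summable b) :
    ∃ v : ℝ → ℝ, ContDiff ℝ (⊤ : ℕ∞) v ∧ HasCompactSupport v ∧
      (∀ x, 0 ≤ v x) ∧ (∫ x, v x) = 1 ∧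
      tsupport v ⊆ Icc 0 (∑' i, b i) ∧
      ∀ k x, |iteratedDeriv k v x| ≤ Bb b k := by
  refine ⟨Vlim b 0, ?_, ?_, Vlim_nonneg hb hsb, Vlim_integral hb hsb, ?_, ?_⟩
  · rw [show ((⊤ : ℕ∞) : WithTop ℕ∞) = (⊤ : ℕ∞) from rfl]
    exact contDiff_infty.2 (fun n => Vlim_contDiff hb hsb n 0)
  · exact HasCompactSupport.intro isCompact_Icc (Vlim_supp hb hsb)
  · apply closure_minimal _ isClosed_Icc
    intro x hx
    by_contra hmem
    exact hx (Vlim_supp hb hsb x hmem)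
  · intro k x
    rw [Vlim_iteratedDeriv hb hsb k]
    exact Vlim_bound hb hsb k x

end Core

/-- Refined Hörmander cutoff lemma: for a nonincreasing positive summable
sequence (a_k) with sum a, and any δ > 0, there is a smooth bump v ≥ 0 with
∫ v = 1, supp v ⊆ [0,a] and |v^{(k)}| ≤ M δ^k (a₀ a₁ ⋯ a_k)⁻¹. -/
theorem stmt_10 (a : ℕ → ℝ) (hpos : ∀ k, 0 < a k) (hmono : ∀ k, a (k + 1) ≤ a k)
    (hsum : Summable a) (δ : ℝ) (hδ : 0 < δ) :
    ∃ v : ℝ → ℝ, ContDiff ℝ (⊤ : ℕ∞) v ∧ HasCompactSupport v ∧ ∃ M : ℝ, 0 < M ∧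
      (∀ x : ℝ, 0 ≤ v x) ∧ (∫ x : ℝ, v x) = 1 ∧
      tsupport v ⊆ Icc 0 (∑' j : ℕ, a j) ∧
      ∀ k : ℕ, ∀ x : ℝ,
        |iteratedDeriv k v x| ≤ M * δ ^ k / ∏ i ∈ Finset.range (k + 1), a i := by
  have hant : Antitone a := antitone_nat_of_succ_le hmono
  set A := ∑' j, a j with hA_def
  have hA : 0 < A := lt_of_lt_of_le (hpos 0) (Summable.le_tsum hsum 0 (fun j _ => (hpos j).le))
  set c := max 1 (2 / δ) with hc_def
  have hc1 : (1:ℝ) ≤ c := le_max_left _ _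
  have hc0 : 0 < c := lt_of_lt_of_le one_pos hc1
  have h2cδ : 2 ≤ c * δ := by
    have : 2 / δ ≤ c := le_max_right _ _
    calc (2:ℝ) = (2 / δ) * δ := by field_simp
      _ ≤ c * δ := by gcongr
  have h1 := Filter.Tendsto.eventually_lt_const
    (show (0:ℝ) < A / (5 * c) by positivity) (tendsto_sum_nat_add a)
  obtain ⟨N, hN1, hN2⟩ := ((eventually_ge_atTop 1).and h1).exists
  set K := 2 * N with hK_def
  set b : ℕ → ℝ := fun i => c * a (max (i - 2) K) with hb_def
  have hb : ∀ i, 0 < b i := fun i => mul_pos hc0 (hpos _)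
  have hshift : Summable (fun i => b (i + (K + 2))) := by
    have h0 : Summable (fun i => a (i + K)) := (summable_nat_add_iff K).2 hsum
    apply (h0.mul_left c).congr
    intro i
    simp only [hb_def]
    congr 2
    omega
  have hsb : Summable b := (summable_nat_add_iff (K + 2)).1 hshift
  have hTK_le : (∑' i, a (i + K)) ≤ ∑' i, a (i + N) := by
    have hsplit := Summable.sum_add_tsum_nat_add (f := fun i => a (i + N)) N
      ((summable_nat_add_iff N).2 hsum)
    have he : (∑' i, a (i + N + N)) = ∑' i, a (i + K) := by
      apply tsum_congr; intro i; congr 1; omega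
    have hnn : 0 ≤ ∑ i ∈ Finset.range N, a (i + N) :=
      Finset.sum_nonneg (fun i _ => (hpos _).le)
    rw [he] at hsplit
    linarith
  have hNaK : (N : ℝ) * a K ≤ ∑' i, a (i + N) := by
    calc (N : ℝ) * a K = ∑ _i ∈ Finset.range N, a K := by
          rw [Finset.sum_const, Finset.card_range, nsmul_eq_mul]
      _ ≤ ∑ i ∈ Finset.range N, a (i + N) := by
          apply Finset.sum_le_sum
          intro i hi
          have hi' := Finset.mem_range.1 hi
          exact hant (by omega : i + N ≤ K)
      _ ≤ ∑' i, a (i + N) := Summable.sum_le_tsum _ (fun i _ => (hpos _).le)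
          ((summable_nat_add_iff N).2 hsum)
  have hsumb : (∑' i, b i) ≤ A := by
    have hsplit := Summable.sum_add_tsum_nat_add (f := b) (K + 2) hsb
    have hhead : (∑ i ∈ Finset.range (K + 2), b i) = (K + 2 : ℝ) * (c * a K) := by
      have he : ∀ i ∈ Finset.range (K + 2), b i = c * a K := by
        intro i hi
        have hi' := Finset.mem_range.1 hi
        simp only [hb_def]
        congr 2
        omega
      rw [Finset.sum_congr rfl he, Finset.sum_const, Finset.card_range, nsmul_eq_mul]
      push_cast; ring
    have htail : (∑' i, b (i + (K + 2))) = c * ∑' i, a (i + K) := by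
      rw [← tsum_mul_left]
      apply tsum_congr
      intro i
      simp only [hb_def]
      congr 2
      omega
    rw [← hsplit, hhead, htail]
    have hTN : (∑' i, a (i + N)) < A / (5 * c) := hN2
    have hN0 : (1:ℝ) ≤ N := by exact_mod_cast hN1
    have hKK : ((K : ℝ) + 2) ≤ 4 * N := by
      simp only [hK_def]; push_cast; linarith
    have haK : 0 < a K := hpos K
    calc ((K:ℝ) + 2) * (c * a K) + c * ∑' i, a (i + K)
        ≤ (4 * N) * (c * a K) + c * ∑' i, a (i + N) := by
          gcongr
      _ = 4 * c * ((N:ℝ) * a K) + c * ∑' i, a (i + N) := by ring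
      _ ≤ 4 * c * (∑' i, a (i + N)) + c * ∑' i, a (i + N) := by
          gcongr
      _ = 5 * c * (∑' i, a (i + N)) := by ring
      _ ≤ 5 * c * (A / (5 * c)) := by
          apply mul_le_mul_of_nonneg_left hTN.le (by positivity)
      _ = A := by field_simp
  have hkey : ∀ k : ℕ, a K ^ K * ∏ i ∈ Finset.range (k + 1), a i ≤
      a 0 ^ (K + 1) * ∏ i ∈ Finset.range k, a (max i K) := by
    intro k
    have ha0 : 0 < a 0 := hpos 0
    have haK : 0 < a K := hpos K
    have haK0 : a K ≤ a 0 := hant (Nat.zero_le K)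
    rcases le_or_gt k K with hk | hk
    · have hQ : (∏ i ∈ Finset.range k, a (max i K)) = a K ^ k := by
        have he : ∀ i ∈ Finset.range k, a (max i K) = a K := by
          intro i hi
          rw [max_eq_right (le_of_lt (lt_of_lt_of_le (Finset.mem_range.1 hi) hk))]
        rw [Finset.prod_congr rfl he, Finset.prod_const, Finset.card_range]
      have hP : (∏ i ∈ Finset.range (k + 1), a i) ≤ a 0 ^ (k + 1) := by
        calc (∏ i ∈ Finset.range (k + 1), a i)
            ≤ ∏ _i ∈ Finset.range (k + 1), a 0 :=
              Finset.prod_le_prod (fun i _ => (hpos i).le)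
                (fun i _ => hant (Nat.zero_le i))
          _ = a 0 ^ (k + 1) := by rw [Finset.prod_const, Finset.card_range]
      have hpow : a K ^ (K - k) ≤ a 0 ^ (K - k) := pow_le_pow_left₀ haK.le haK0 _
      rw [hQ]
      calc a K ^ K * ∏ i ∈ Finset.range (k + 1), a i
          ≤ a K ^ K * a 0 ^ (k + 1) := mul_le_mul_of_nonneg_left hP (by positivity)
        _ = a K ^ k * a K ^ (K - k) * a 0 ^ (k + 1) := by
            rw [← pow_add, show k + (K - k) = K from by omega]
        _ ≤ a K ^ k * a 0 ^ (K - k) * a 0 ^ (k + 1) := by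
            apply mul_le_mul_of_nonneg_right _ (by positivity)
            exact mul_le_mul_of_nonneg_left hpow (by positivity)
        _ = a 0 ^ (K + 1) * a K ^ k := by
            rw [mul_assoc, ← pow_add, show K - k + (k + 1) = K + 1 from by omega]
            ring
    · have hsplitQ : (∏ i ∈ Finset.range k, a (max i K)) =
          a K ^ K * ∏ i ∈ Finset.Ico K k, a i := by
        rw [Finset.range_eq_Ico, ← Finset.prod_Ico_consecutive _ (Nat.zero_le K) hk.le]
        have h1' : (∏ i ∈ Finset.Ico 0 K, a (max i K)) = a K ^ K := by
          have he : ∀ i ∈ Finset.Ico 0 K, a (max i K) = a K := by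
            intro i hi
            rw [max_eq_right (le_of_lt (Finset.mem_Ico.1 hi).2)]
          rw [Finset.prod_congr rfl he, Finset.prod_const, Nat.card_Ico, Nat.sub_zero]
        have h2' : ∀ i ∈ Finset.Ico K k, a (max i K) = a i := by
          intro i hi
          rw [max_eq_left (Finset.mem_Ico.1 hi).1]
        rw [h1', Finset.prod_congr rfl h2']
      have hsplitP : (∏ i ∈ Finset.range (k + 1), a i) =
          (∏ i ∈ Finset.Ico 0 K, a i) * ((∏ i ∈ Finset.Ico K k, a i) * a k) := by
        rw [Finset.range_eq_Ico, ← Finset.prod_Ico_consecutive _ (Nat.zero_le K)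
          (by omega : K ≤ k + 1)]
        congr 1
        rw [Finset.prod_Ico_succ_top hk.le]
      have hP0 : (∏ i ∈ Finset.Ico 0 K, a i) ≤ a 0 ^ K := by
        calc (∏ i ∈ Finset.Ico 0 K, a i)
            ≤ ∏ _i ∈ Finset.Ico 0 K, a 0 :=
              Finset.prod_le_prod (fun i _ => (hpos i).le)
                (fun i _ => hant (Nat.zero_le i))
          _ = a 0 ^ K := by rw [Finset.prod_const, Nat.card_Ico, Nat.sub_zero]
      have hPm : 0 < ∏ i ∈ Finset.Ico K k, a i := Finset.prod_pos (fun i _ => hpos i)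
      rw [hsplitQ, hsplitP]
      have inner : (∏ i ∈ Finset.Ico 0 K, a i) * ((∏ i ∈ Finset.Ico K k, a i) * a k)
          ≤ a 0 ^ K * ((∏ i ∈ Finset.Ico K k, a i) * a 0) := by
        apply mul_le_mul hP0 _ (mul_nonneg hPm.le (hpos k).le) (by positivity)
        exact mul_le_mul_of_nonneg_left (hant (Nat.zero_le k)) hPm.le
      calc a K ^ K * ((∏ i ∈ Finset.Ico 0 K, a i) * ((∏ i ∈ Finset.Ico K k, a i) * a k))
          ≤ a K ^ K * (a 0 ^ K * ((∏ i ∈ Finset.Ico K k, a i) * a 0)) :=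
            mul_le_mul_of_nonneg_left inner (by positivity)
        _ = a 0 ^ (K + 1) * (a K ^ K * ∏ i ∈ Finset.Ico K k, a i) := by ring
  obtain ⟨v, hv1, hv2, hv3, hv4, hv5, hv6⟩ := core_exists hb hsb
  have haK : 0 < a K := hpos K
  have ha0 : 0 < a 0 := hpos 0
  refine ⟨v, hv1, hv2, (a 0 / a K) ^ (K + 1), by positivity, hv3, hv4, ?_, ?_⟩
  · exact hv5.trans (Icc_subset_Icc_right hsumb)
  · intro k x
    apply (hv6 k x).trans
    have hP : 0 < ∏ i ∈ Finset.range (k + 1), a i := Finset.prod_pos (fun i _ => hpos i)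
    have hQ : 0 < ∏ i ∈ Finset.range k, a (max i K) := Finset.prod_pos (fun i _ => hpos _)
    have hb0 : b 0 = c * a K := by
      simp only [hb_def]
      congr 2
    have hbi : ∀ i : ℕ, b (i + 2) = c * a (max i K) := fun i => rfl
    have hprod : (∏ i ∈ Finset.range k, b (i + 2)) =
        c ^ k * ∏ i ∈ Finset.range k, a (max i K) := by
      rw [Finset.prod_congr rfl (fun i _ => hbi i), Finset.prod_mul_distrib,
        Finset.prod_const, Finset.card_range]
    rw [Bb, hb0, hprod, div_le_div_iff₀ (by positivity) (by positivity)]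
    have h2k : (2:ℝ) ^ k ≤ c ^ k * δ ^ k := by
      rw [← mul_pow]
      exact pow_le_pow_left₀ (by norm_num) h2cδ k
    have heq : (a 0 / a K) ^ (K + 1) * δ ^ k *
        (c * a K * (c ^ k * ∏ i ∈ Finset.range k, a (max i K))) =
        (c ^ k * δ ^ k) * (c * (a 0 ^ (K + 1) *
          (∏ i ∈ Finset.range k, a (max i K)) / a K ^ K)) := by
      rw [div_pow]
      field_simp
      ring
    rw [heq]
    apply mul_le_mul h2k ?_ hP.le (by positivity)
    have h6 : (∏ i ∈ Finset.range (k + 1), a i) ≤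
        a 0 ^ (K + 1) * (∏ i ∈ Finset.range k, a (max i K)) / a K ^ K := by
      rw [le_div_iff₀ (by positivity)]
      calc (∏ i ∈ Finset.range (k + 1), a i) * a K ^ K
          = a K ^ K * ∏ i ∈ Finset.range (k + 1), a i := by ring
        _ ≤ a 0 ^ (K + 1) * ∏ i ∈ Finset.range k, a (max i K) := hkey k
    have hnn : 0 ≤ a 0 ^ (K + 1) * (∏ i ∈ Finset.range k, a (max i K)) / a K ^ K :=
      div_nonneg (mul_nonneg (by positivity) hQ.le) (by positivity)
    calc (∏ i ∈ Finset.range (k + 1), a i)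
        ≤ a 0 ^ (K + 1) * (∏ i ∈ Finset.range k, a (max i K)) / a K ^ K := h6
      _ = 1 * (a 0 ^ (K + 1) * (∏ i ∈ Finset.range k, a (max i K)) / a K ^ K) :=
          (one_mul _).symm
      _ ≤ c * (a 0 ^ (K + 1) * (∏ i ∈ Finset.range k, a (max i K)) / a K ^ K) :=
          mul_le_mul_of_nonneg_right hc1 hnn
end

section
/- Let (a_k)_{k≥1} be a sequence of real numbers with a₁ ≥ a₂ ≥ ⋯ > 0 and a := Σ_{k≥1} a_k < ∞. Then for any δ > 0 there exist a function φ : ℝ → ℝ, infinitely differentiable with compact support, and a constant C > 0, such that the support of φ is contained in [-a,a], 0 ≤ φ(x) ≤ 1 for all x, φ(0) = 1, φ^{(p)}(0) = 0 for all p ≥ 1, and |φ^{(k)}(x)| ≤ C δ^k (a₁ ⋯ a_k)^{-1} for all k ∈ ℕ and all x ∈ ℝ (with the convention that the empty product a₁ ⋯ a_k equals 1 when k = 0). -/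
open Set Filter MeasureTheory intervalIntegral Finset

noncomputable def Tb (b : ℝ) (f : ℝ → ℝ) : ℝ → ℝ :=
  fun x => (∫ t in (x - b/2)..(x + b/2), f t) / b

noncomputable def Sb (b : ℝ) (f : ℝ → ℝ) : ℝ → ℝ :=
  fun x => (f (x + b/2) - f (x - b/2)) / b

lemma Sb_continuous {b : ℝ} {f : ℝ → ℝ} (hf : Continuous f) : Continuous (Sb b f) := by
  unfold Sb
  fun_prop

lemma Sb_abs_le {b M : ℝ} {f : ℝ → ℝ} (hb : 0 < b) (hM : ∀ t, |f t| ≤ M) (x : ℝ) :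
    |Sb b f x| ≤ 2 * M / b := by
  unfold Sb
  rw [abs_div, abs_of_pos hb]
  gcongr
  calc |f (x + b/2) - f (x - b/2)| ≤ |f (x + b/2)| + |f (x - b/2)| := abs_sub _ _
  _ ≤ M + M := add_le_add (hM _) (hM _)
  _ = 2 * M := by ring

lemma Tb_hasDerivAt {b : ℝ} {f : ℝ → ℝ} (hb : 0 < b) (hf : Continuous f) (x : ℝ) :
    HasDerivAt (Tb b f) (Sb b f x) x := by
  have key : Tb b f = fun y => ((∫ t in (0:ℝ)..(y + b/2), f t) - ∫ t in (0:ℝ)..(y - b/2), f t) / b := by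
    funext y
    unfold Tb
    rw [integral_interval_sub_left (hf.intervalIntegrable _ _) (hf.intervalIntegrable _ _)]
  rw [key]
  have h1 : HasDerivAt (fun y : ℝ => ∫ t in (0:ℝ)..(y + b/2), f t) (f (x + b/2)) x := by
    have := ((hf.integral_hasStrictDerivAt 0 (x + b/2)).hasDerivAt).comp x
      ((hasDerivAt_id x).add_const (b/2))
    simpa [Function.comp_def] using this
  have h2 : HasDerivAt (fun y : ℝ => ∫ t in (0:ℝ)..(y - b/2), f t) (f (x - b/2)) x := by
    have := ((hf.integral_hasStrictDerivAt 0 (x - b/2)).hasDerivAt).comp x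
      ((hasDerivAt_id x).sub_const (b/2))
    simpa [Function.comp_def] using this
  exact (h1.sub h2).div_const b

lemma Tb_continuous {b : ℝ} {f : ℝ → ℝ} (hb : 0 < b) (hf : Continuous f) :
    Continuous (Tb b f) :=
  continuous_iff_continuousAt.2 fun x => (Tb_hasDerivAt hb hf x).continuousAt

lemma Tb_abs_le {b M : ℝ} {f : ℝ → ℝ} (hb : 0 < b) (hM : ∀ t, |f t| ≤ M) (x : ℝ) :
    |Tb b f x| ≤ M := by
  have hM0 : 0 ≤ M := le_trans (abs_nonneg _) (hM 0)
  unfold Tb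
  rw [abs_div, abs_of_pos hb, div_le_iff₀ hb]
  have := intervalIntegral.norm_integral_le_of_norm_le_const
    (a := x - b/2) (b := x + b/2) (C := M) (f := f) (fun t _ => by
      rw [Real.norm_eq_abs]; exact hM t)
  rw [Real.norm_eq_abs] at this
  refine this.trans ?_
  have : |x + b/2 - (x - b/2)| = b := by
    rw [show x + b/2 - (x - b/2) = b by ring, abs_of_pos hb]
  rw [this, mul_comm]

lemma Tb_nonneg {b : ℝ} {f : ℝ → ℝ} (hb : 0 < b) (h : ∀ t, 0 ≤ f t) (x : ℝ) :
    0 ≤ Tb b f x := by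
  unfold Tb
  apply div_nonneg _ hb.le
  exact intervalIntegral.integral_nonneg (by linarith) (fun t _ => h t)

lemma Tb_le_one {b : ℝ} {f : ℝ → ℝ} (hb : 0 < b) (hf : Continuous f)
    (h : ∀ t, f t ≤ 1) (x : ℝ) : Tb b f x ≤ 1 := by
  unfold Tb
  rw [div_le_one hb]
  have hle : (∫ t in (x - b/2)..(x + b/2), f t) ≤ ∫ _t in (x - b/2)..(x + b/2), (1:ℝ) :=
    intervalIntegral.integral_mono_on (by linarith) (hf.intervalIntegrable _ _)
      intervalIntegrable_const (fun t _ => h t)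
  refine hle.trans ?_
  rw [intervalIntegral.integral_const, smul_eq_mul, mul_one]
  linarith

lemma Tb_const_on {b v : ℝ} {f : ℝ → ℝ} (hb : 0 < b) (x : ℝ)
    (h : ∀ t ∈ Icc (x - b/2) (x + b/2), f t = v) : Tb b f x = v := by
  unfold Tb
  have heq : Set.EqOn f (fun _ => v) (Set.uIcc (x - b/2) (x + b/2)) := by
    intro t ht
    rw [Set.uIcc_of_le (by linarith)] at ht
    exact h t ht
  rw [intervalIntegral.integral_congr heq, intervalIntegral.integral_const,
    show x + b/2 - (x - b/2) = b by ring, smul_eq_mul, mul_div_cancel_left₀ _ (ne_of_gt hb)]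

lemma Tb_close {b K : ℝ} {f f' : ℝ → ℝ} (hb : 0 < b)
    (hd : ∀ y, HasDerivAt f (f' y) y) (hf : Continuous f)
    (hK : ∀ t, |f' t| ≤ K) (x : ℝ) : |Tb b f x - f x| ≤ K * b / 2 := by
  have hK0 : 0 ≤ K := le_trans (abs_nonneg _) (hK 0)
  have hlip : LipschitzWith (Real.toNNReal K) f := by
    apply lipschitzWith_of_nnnorm_deriv_le (fun y => (hd y).differentiableAt)
    intro y
    rw [← NNReal.coe_le_coe, coe_nnnorm, Real.coe_toNNReal _ hK0, (hd y).deriv,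
      Real.norm_eq_abs]
    exact hK y
  have hfar : ∀ t, |f t - f x| ≤ K * |t - x| := by
    intro t
    have := hlip.dist_le_mul t x
    rwa [Real.dist_eq, Real.dist_eq, Real.coe_toNNReal _ hK0] at this
  have key : Tb b f x - f x = (∫ t in (x - b/2)..(x + b/2), (f t - f x)) / b := by
    unfold Tb
    rw [intervalIntegral.integral_sub (hf.intervalIntegrable _ _) intervalIntegrable_const,
      intervalIntegral.integral_const, show x + b/2 - (x - b/2) = b by ring, smul_eq_mul,
      sub_div, mul_div_cancel_left₀ _ (ne_of_gt hb)]
  rw [key, abs_div, abs_of_pos hb, div_le_iff₀ hb]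
  have hbnd := intervalIntegral.norm_integral_le_of_norm_le_const
    (a := x - b/2) (b := x + b/2) (C := K * (b/2)) (f := fun t => f t - f x) ?_
  · rw [Real.norm_eq_abs] at hbnd
    refine hbnd.trans ?_
    rw [show x + b/2 - (x - b/2) = b by ring, abs_of_pos hb]
    ring_nf
    nlinarith [hK 0, abs_nonneg (f' 0)]
  · intro t ht
    rw [Set.uIoc_of_le (by linarith)] at ht
    rw [Real.norm_eq_abs]
    refine (hfar t).trans ?_
    apply mul_le_mul_of_nonneg_left _ hK0
    rw [abs_le]
    constructor <;> [linarith [ht.1]; linarith [ht.2]]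

lemma Sb_eq_Tb_deriv {b : ℝ} {f f' : ℝ → ℝ} (hb : 0 < b)
    (hd : ∀ y, HasDerivAt f (f' y) y) (hc : Continuous f') :
    Tb b f' = Sb b f := by
  funext x
  unfold Tb Sb
  rw [intervalIntegral.integral_eq_sub_of_hasDerivAt (fun t _ => hd t)
    (hc.intervalIntegrable _ _)]
noncomputable def wseq (b : ℕ → ℝ) (u0 : ℝ → ℝ) : ℕ → ℝ → ℝ
  | 0 => u0
  | (k+1) => Sb (b (k+1)) (wseq b u0 k)

noncomputable def dseq (b : ℕ → ℝ) (u0 : ℝ → ℝ) (k : ℕ) : ℕ → ℝ → ℝ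
  | 0 => wseq b u0 k
  | (n+1) => if k ≤ n then Tb (b (n+1)) (dseq b u0 k n) else wseq b u0 k

section Main

variable {b : ℕ → ℝ} {u0 : ℝ → ℝ}
variable (hb : ∀ i, 1 ≤ i → 0 < b i) (hu0c : Continuous u0)

lemma dseq_succ_of_le {k n : ℕ} (h : k ≤ n) :
    dseq b u0 k (n+1) = Tb (b (n+1)) (dseq b u0 k n) := by
  simp [dseq, h]

lemma dseq_eq_wseq {k n : ℕ} (h : n ≤ k) : dseq b u0 k n = wseq b u0 k := by
  cases n with
  | zero => rfl
  | succ m => simp [dseq, show ¬ (k ≤ m) by omega]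

include hu0c in
lemma wseq_continuous (k : ℕ) : Continuous (wseq b u0 k) := by
  induction k with
  | zero => exact hu0c
  | succ k ih => exact Sb_continuous ih

include hb hu0c in
lemma dseq_continuous (k n : ℕ) : Continuous (dseq b u0 k n) := by
  induction n with
  | zero => exact wseq_continuous hu0c k
  | succ n ih =>
    by_cases h : k ≤ n
    · rw [dseq_succ_of_le h]
      exact Tb_continuous (hb (n+1) (by omega)) ih
    · rw [dseq_eq_wseq (by omega)]
      exact wseq_continuous hu0c k

/-- bound `2^k / ∏ b_i`. -/
noncomputable def Mb (b : ℕ → ℝ) (k : ℕ) : ℝ := 2^k / ∏ i ∈ Finset.Icc 1 k, b i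

include hb in
lemma prod_b_pos (k : ℕ) : 0 < ∏ i ∈ Finset.Icc 1 k, b i :=
  Finset.prod_pos fun i hi => hb i (Finset.mem_Icc.1 hi).1

include hb in
lemma Mb_pos (k : ℕ) : 0 < Mb b k :=
  div_pos (by positivity) (prod_b_pos hb k)

include hb in
lemma Mb_succ (k : ℕ) : Mb b (k+1) = 2 * Mb b k / b (k+1) := by
  unfold Mb
  rw [Finset.prod_Icc_succ_top (by omega)]
  have h1 : (∏ i ∈ Finset.Icc 1 k, b i) ≠ 0 := ne_of_gt (prod_b_pos hb k)
  have h2 : b (k+1) ≠ 0 := ne_of_gt (hb (k+1) (by omega))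
  field_simp
  ring

include hb in
lemma wseq_abs_le (h01 : ∀ x, |u0 x| ≤ 1) (k : ℕ) (x : ℝ) :
    |wseq b u0 k x| ≤ Mb b k := by
  induction k generalizing x with
  | zero => simpa [Mb, wseq] using h01 x
  | succ k ih =>
    have := Sb_abs_le (b := b (k+1)) (f := wseq b u0 k) (M := Mb b k)
      (hb (k+1) (by omega)) ih x
    rwa [← Mb_succ hb] at this
  
include hb in
lemma dseq_abs_le (h01 : ∀ x, |u0 x| ≤ 1) (k n : ℕ) (x : ℝ) :
    |dseq b u0 k n x| ≤ Mb b k := by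
  induction n generalizing x with
  | zero => exact wseq_abs_le hb h01 k x
  | succ n ih =>
    by_cases h : k ≤ n
    · rw [dseq_succ_of_le h]
      exact Tb_abs_le (hb (n+1) (by omega)) ih x
    · rw [dseq_eq_wseq (by omega)]
      exact wseq_abs_le hb h01 k x

include hb hu0c in
lemma dseq_hasDerivAt (k n : ℕ) (h : k < n) (x : ℝ) :
    HasDerivAt (dseq b u0 k n) (dseq b u0 (k+1) n x) x := by
  induction n generalizing x with
  | zero => omega
  | succ n ih =>
    rcases Nat.lt_succ_iff_lt_or_eq.1 h with h' | h'
    · -- k < n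
      rw [dseq_succ_of_le (le_of_lt h'), dseq_succ_of_le (by omega)]
      have hTb := Tb_hasDerivAt (hb (n+1) (by omega)) (dseq_continuous hb hu0c k n) x
      have hrw : Tb (b (n+1)) (dseq b u0 (k+1) n) = Sb (b (n+1)) (dseq b u0 k n) :=
        Sb_eq_Tb_deriv (hb (n+1) (by omega)) (fun y => ih h' y)
          (dseq_continuous hb hu0c (k+1) n)
      rw [hrw]
      exact hTb
    · -- k = n
      subst h'
      rw [dseq_succ_of_le le_rfl, dseq_eq_wseq le_rfl, dseq_eq_wseq le_rfl]
      exact Tb_hasDerivAt (f := wseq b u0 k) (hb (k+1) (by omega))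
        (wseq_continuous hu0c k) x

include hb hu0c in
lemma dseq_cauchy (h01 : ∀ x, |u0 x| ≤ 1) (k n : ℕ) (h : k + 1 ≤ n) (x : ℝ) :
    |dseq b u0 k (n+1) x - dseq b u0 k n x| ≤ Mb b (k+1) * b (n+1) / 2 := by
  rw [dseq_succ_of_le (by omega)]
  exact Tb_close (hb (n+1) (by omega))
    (fun y => dseq_hasDerivAt hb hu0c k n (by omega) y)
    (dseq_continuous hb hu0c k n)
    (fun t => dseq_abs_le hb h01 (k+1) n t) x

end Main
section Flat

variable {b : ℕ → ℝ} {u0 : ℝ → ℝ} {c s : ℝ}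
variable (hb : ∀ i, 1 ≤ i → 0 < b i) (hu0c : Continuous u0)

lemma window_abs {t x β : ℝ} (ht : t ∈ Icc (x - β/2) (x + β/2)) :
    |t - x| ≤ β/2 := by
  rw [abs_le]; exact ⟨by linarith [ht.1], by linarith [ht.2]⟩

include hb in
lemma dseq_flat (hflat : ∀ x, |x| ≤ c → u0 x = 1) (n : ℕ) :
    ∀ x, |x| ≤ c - (∑ i ∈ Finset.Icc 1 n, b i)/2 → dseq b u0 0 n x = 1 := by
  induction n with
  | zero =>
    intro x hx
    apply hflat
    simpa using hx
  | succ n ih =>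
    intro x hx
    rw [dseq_succ_of_le (Nat.zero_le n)]
    apply Tb_const_on (hb (n+1) (by omega))
    intro t ht
    apply ih
    have hsum : ∑ i ∈ Finset.Icc 1 (n+1), b i = (∑ i ∈ Finset.Icc 1 n, b i) + b (n+1) :=
      Finset.sum_Icc_succ_top (by omega) _
    have htx := window_abs ht
    have : |t| ≤ |x| + |t - x| := by
      calc |t| = |x + (t - x)| := by ring_nf
      _ ≤ |x| + |t - x| := abs_add_le _ _
    rw [hsum] at hx
    linarith

include hb in
lemma dseq_supp (hsupp : ∀ x, s ≤ |x| → u0 x = 0) (n : ℕ) :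
    ∀ x, s + (∑ i ∈ Finset.Icc 1 n, b i)/2 ≤ |x| → dseq b u0 0 n x = 0 := by
  induction n with
  | zero =>
    intro x hx
    apply hsupp
    simpa using hx
  | succ n ih =>
    intro x hx
    rw [dseq_succ_of_le (Nat.zero_le n)]
    apply Tb_const_on (hb (n+1) (by omega))
    intro t ht
    apply ih
    have hsum : ∑ i ∈ Finset.Icc 1 (n+1), b i = (∑ i ∈ Finset.Icc 1 n, b i) + b (n+1) :=
      Finset.sum_Icc_succ_top (by omega) _
    have htx := window_abs ht
    have : |x| ≤ |t| + |x - t| := by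
      calc |x| = |t + (x - t)| := by ring_nf
      _ ≤ |t| + |x - t| := abs_add_le _ _
    rw [abs_sub_comm] at htx
    rw [hsum] at hx
    linarith

include hb hu0c in
lemma dseq_range01 (h0 : ∀ x, 0 ≤ u0 x) (h1 : ∀ x, u0 x ≤ 1) (n : ℕ) :
    ∀ x, 0 ≤ dseq b u0 0 n x ∧ dseq b u0 0 n x ≤ 1 := by
  induction n with
  | zero => exact fun x => ⟨h0 x, h1 x⟩
  | succ n ih =>
    intro x
    rw [dseq_succ_of_le (Nat.zero_le n)]
    exact ⟨Tb_nonneg (hb (n+1) (by omega)) (fun t => (ih t).1) x,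
      Tb_le_one (hb (n+1) (by omega)) (dseq_continuous hb hu0c 0 n) (fun t => (ih t).2) x⟩

end Flat

lemma tendstoUniformly_add_const {c : ℝ → ℝ} {F : ℕ → ℝ → ℝ} {G : ℝ → ℝ}
    (h : TendstoUniformly F G atTop) :
    TendstoUniformly (fun n x => c x + F n x) (fun x => c x + G x) atTop := by
  rw [Metric.tendstoUniformly_iff] at h ⊢
  intro ε hε
  filter_upwards [h ε hε] with n hn x
  simpa [dist_add_left] using hn x

theorem exists_smooth_aux (b : ℕ → ℝ) (hb : ∀ i, 1 ≤ i → 0 < b i) (hbsum : Summable b)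
    (u0 : ℝ → ℝ) (hu0c : Continuous u0) (hu00 : ∀ x, 0 ≤ u0 x) (hu01 : ∀ x, u0 x ≤ 1)
    (c s σ : ℝ) (hσ0 : 0 ≤ σ) (hσc : σ < c)
    (hflat : ∀ x, |x| ≤ c → u0 x = 1)
    (hsupp : ∀ x, s ≤ |x| → u0 x = 0)
    (hσn : ∀ n, (∑ i ∈ Finset.Icc 1 n, b i) ≤ 2*σ) :
    ∃ φ : ℝ → ℝ, ContDiff ℝ (⊤ : ℕ∞) φ ∧
      (∀ x, 0 ≤ φ x ∧ φ x ≤ 1) ∧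
      (∀ x, |x| ≤ c - σ → φ x = 1) ∧
      (∀ p, 1 ≤ p → ∀ x, |x| < c - σ → iteratedDeriv p φ x = 0) ∧
      (∀ x, s + σ ≤ |x| → φ x = 0) ∧
      (∀ k x, |iteratedDeriv k φ x| ≤ Mb b k) := by
  have h01 : ∀ x, |u0 x| ≤ 1 := fun x => abs_le.2 ⟨by linarith [hu00 x], hu01 x⟩
  set d := dseq b u0 with hd
  set g : ℕ → ℝ → ℝ :=
    fun k x => d k (k+2) x + ∑' j, (d k (j+(k+3)) x - d k (j+(k+2)) x) with hg
  have hTU : ∀ k, TendstoUniformly (fun N => d k (N + (k+2))) (g k) atTop := by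
    intro k
    have hs1 : Summable (fun j => b (j + (k+3))) := (summable_nat_add_iff (k+3)).2 hbsum
    have hsummable : Summable (fun j => Mb b (k+1) * b (j + (k+3)) / 2) := by
      simpa [mul_div_assoc] using (hs1.div_const 2).mul_left (Mb b (k+1))
    have hbound : ∀ (j : ℕ) (x : ℝ),
        ‖d k (j+(k+3)) x - d k (j+(k+2)) x‖ ≤ Mb b (k+1) * b (j + (k+3)) / 2 := by
      intro j x
      rw [Real.norm_eq_abs]
      have h2 := dseq_cauchy hb hu0c h01 k (j+(k+2)) (by omega) x
      have e1 : j + (k+2) + 1 = j + (k+3) := by omega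
      rw [e1] at h2
      exact h2
    have hts := tendstoUniformly_tsum_nat hsummable hbound
    have h3 := tendstoUniformly_add_const (c := fun x => d k (k+2) x) hts
    have htel : ∀ (N : ℕ) (x : ℝ), d k (k+2) x +
        (∑ j ∈ Finset.range N, (d k (j+(k+3)) x - d k (j+(k+2)) x)) = d k (N+(k+2)) x := by
      intro N x
      induction N with
      | zero => simp
      | succ N ih =>
        rw [Finset.sum_range_succ, ← add_assoc, ih]
        have e2 : N + 1 + (k+2) = (N + (k+2)) + 1 := by omega
        have e3 : N + (k+3) = (N + (k+2)) + 1 := by omega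
        rw [e2, e3]
        ring
    have hfun : (fun (N : ℕ) (x : ℝ) => d k (k+2) x +
        ∑ j ∈ Finset.range N, (d k (j+(k+3)) x - d k (j+(k+2)) x)) =
        (fun N => d k (N+(k+2))) := by
      funext N x
      exact htel N x
    rw [hfun] at h3
    exact h3
  have hcont : ∀ k, Continuous (g k) := fun k =>
    (hTU k).continuous (Filter.Frequently.of_forall fun N => dseq_continuous hb hu0c k _)
  have hpt : ∀ k x, Filter.Tendsto (fun N => d k (N+(k+2)) x) Filter.atTop (nhds (g k x)) :=
    fun k x => (hTU k).tendsto_at x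
  have hder : ∀ k x, HasDerivAt (g k) (g (k+1) x) x := by
    intro k x
    apply hasDerivAt_of_tendstoUniformly (l := Filter.atTop)
      (f := fun N => d k (N+(k+3))) (f' := fun N => d (k+1) (N+(k+3)))
    · exact hTU (k+1)
    · exact Filter.Eventually.of_forall
        (fun N y => dseq_hasDerivAt hb hu0c k (N+(k+3)) (by omega) y)
    · intro y
      have h4 := (hpt k y).comp (tendsto_add_atTop_nat 1)
      have e4 : (fun N : ℕ => d k (N+(k+2)) y) ∘ (fun n => n + 1) =
          fun N => d k (N+(k+3)) y := by
        funext N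
        simp only [Function.comp]
        congr 1
        omega
      rwa [e4] at h4
  have habs : ∀ k x, |g k x| ≤ Mb b k := fun k x =>
    le_of_tendsto (hpt k x).abs
      (Filter.Eventually.of_forall fun N => dseq_abs_le hb h01 k _ x)
  have hrange : ∀ x, 0 ≤ g 0 x ∧ g 0 x ≤ 1 := by
    intro x
    constructor
    · exact ge_of_tendsto (hpt 0 x)
        (Filter.Eventually.of_forall fun N => (dseq_range01 hb hu0c hu00 hu01 _ x).1)
    · exact le_of_tendsto (hpt 0 x)
        (Filter.Eventually.of_forall fun N => (dseq_range01 hb hu0c hu00 hu01 _ x).2)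
  have hflat' : ∀ x, |x| ≤ c - σ → g 0 x = 1 := by
    intro x hx
    have heq : ∀ N : ℕ, d 0 (N+2) x = 1 := by
      intro N
      apply dseq_flat hb hflat
      have := hσn (N+2)
      linarith
    exact tendsto_nhds_unique (hpt 0 x) (by simpa [heq] using tendsto_const_nhds)
  have hsupp' : ∀ x, s + σ ≤ |x| → g 0 x = 0 := by
    intro x hx
    have heq : ∀ N : ℕ, d 0 (N+2) x = 0 := by
      intro N
      apply dseq_supp hb hsupp
      have := hσn (N+2)
      linarith
    exact tendsto_nhds_unique (hpt 0 x) (by simpa [heq] using tendsto_const_nhds)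
  have hflatd : ∀ p x, |x| < c - σ → g p x = if p = 0 then 1 else 0 := by
    intro p
    induction p with
    | zero =>
      intro x hx
      simpa using hflat' x hx.le
    | succ p ih =>
      intro x hx
      have hopen : IsOpen {y : ℝ | |y| < c - σ} := isOpen_lt continuous_abs continuous_const
      have hev : ∀ᶠ y in nhds x, g p y = (if p = 0 then (1:ℝ) else 0) := by
        filter_upwards [hopen.mem_nhds hx] with y hy
        exact ih y hy
      have hconst : HasDerivAt (g p) 0 x :=
        (hasDerivAt_const x (if p = 0 then (1:ℝ) else 0)).congr_of_eventuallyEq hev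
      have := (hder p x).unique hconst
      simp [this]
  have hdiff : ∀ k, Differentiable ℝ (g k) := fun k x => (hder k x).differentiableAt
  have hderiv_eq : ∀ k, deriv (g k) = g (k+1) := fun k => funext fun x => (hder k x).deriv
  have hcd : ∀ (n : ℕ) (k : ℕ), ContDiff ℝ n (g k) := by
    intro n
    induction n with
    | zero => exact fun k => contDiff_zero.2 (hcont k)
    | succ n ih =>
      intro k
      rw [show ((n+1 : ℕ) : WithTop ℕ∞) = (n : WithTop ℕ∞) + 1 by push_cast; ring]
      refine contDiff_succ_iff_deriv.2 ⟨hdiff k, ?_, ?_⟩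
      · intro h
        simp at h
      · rw [hderiv_eq]
        exact ih (k+1)
  have hsmooth : ContDiff ℝ (⊤ : ℕ∞) (g 0) := contDiff_infty.2 fun n => hcd n 0
  have hitd : ∀ k j, iteratedDeriv k (g j) = g (j+k) := by
    intro k
    induction k with
    | zero => intro j; simp
    | succ k ih =>
      intro j
      rw [iteratedDeriv_succ', hderiv_eq j, ih (j+1), show j+1+k = j+(k+1) from by omega]
  refine ⟨g 0, hsmooth, hrange, hflat', ?_, hsupp', ?_⟩
  · intro p hp x hx
    have h5 : iteratedDeriv p (g 0) = g p := by simpa using hitd p 0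
    have hne : p ≠ 0 := by omega
    rw [h5, hflatd p x hx, if_neg hne]
  · intro k x
    have h5 : iteratedDeriv k (g 0) = g k := by simpa using hitd k 0
    rw [h5]
    exact habs k x
lemma one_le_prod_real {s : Finset ℕ} {f : ℕ → ℝ} (h : ∀ i ∈ s, 1 ≤ f i) :
    1 ≤ ∏ i ∈ s, f i := by
  have := Finset.prod_le_prod (f := fun _ => (1:ℝ)) (g := f) (fun i _ => zero_le_one) h
  simpa using this

lemma prod_le_prod_subset_real {s t : Finset ℕ} {f : ℕ → ℝ} (hst : s ⊆ t)
    (h1 : ∀ i ∈ t, 1 ≤ f i) : ∏ i ∈ s, f i ≤ ∏ i ∈ t, f i := by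
  rw [← Finset.prod_sdiff hst]
  have hs : 1 ≤ ∏ i ∈ t \ s, f i :=
    one_le_prod_real (fun i hi => h1 i (Finset.mem_sdiff.1 hi).1)
  have hp : 0 < ∏ i ∈ s, f i :=
    Finset.prod_pos fun i hi => lt_of_lt_of_le one_pos (h1 i (hst hi))
  exact le_mul_of_one_le_left hp.le hs

/-- Cutoff corollary: for a nonincreasing positive summable sequence (a_k)_{k≥1}
with sum a, and any δ > 0, there is a smooth φ with support in [-a,a],
0 ≤ φ ≤ 1, φ(0) = 1, φ^{(p)}(0) = 0 for p ≥ 1, and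
|φ^{(k)}| ≤ C δ^k (a₁ ⋯ a_k)⁻¹. -/
theorem stmt_11 (a : ℕ → ℝ) (hpos : ∀ k, 1 ≤ k → 0 < a k)
    (hmono : ∀ k, 1 ≤ k → a (k + 1) ≤ a k)
    (hsum : Summable (fun k : ℕ => a (k + 1)))
    (δ : ℝ) (hδ : 0 < δ) :
    ∃ φ : ℝ → ℝ, ∃ C : ℝ, ContDiff ℝ (⊤ : ℕ∞) φ ∧ HasCompactSupport φ ∧ 0 < C ∧
      tsupport φ ⊆ Icc (-(∑' k : ℕ, a (k + 1))) (∑' k : ℕ, a (k + 1)) ∧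
      (∀ x : ℝ, 0 ≤ φ x ∧ φ x ≤ 1) ∧
      φ 0 = 1 ∧ (∀ p : ℕ, 1 ≤ p → iteratedDeriv p φ 0 = 0) ∧
      ∀ k : ℕ, ∀ x : ℝ,
        |iteratedDeriv k φ x| ≤ C * δ ^ k / ∏ i ∈ Finset.Icc 1 k, a i := by
  set A : ℝ := ∑' k : ℕ, a (k + 1) with hA_def
  have hA1 : a 1 ≤ A := by
    have := Summable.le_tsum hsum 0 (fun j _ => (hpos (j+1) (by omega)).le)
    simpa using this
  have hA : 0 < A := lt_of_lt_of_le (hpos 1 le_rfl) hA1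
  -- choose N with small tail
  have htail : Filter.Tendsto (fun i => ∑' k : ℕ, a (k + i + 1)) Filter.atTop (nhds 0) := by
    have := tendsto_sum_nat_add (f := fun k => a (k + 1))
    exact this
  obtain ⟨N, hN⟩ : ∃ N : ℕ, ∑' k : ℕ, a (k + N + 1) ≤ δ * A / 16 := by
    have hev := htail.eventually (eventually_le_nhds (show (0:ℝ) < δ * A / 16 by positivity))
    exact hev.exists
  have hsumshift : Summable (fun j : ℕ => a (j + N + 1)) :=
    (summable_nat_add_iff (f := fun k => a (k + 1)) N).2 hsum
  set T0 : ℝ := ∑' k : ℕ, a (k + N + 1) with hT0_def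
  have hT0nn : 0 ≤ T0 := tsum_nonneg fun j => (hpos (j + N + 1) (by omega)).le
  have htailsum : ∀ n, ∑ i ∈ Finset.Icc (N+1) n, a i ≤ T0 := by
    intro n
    have hre : ∑ i ∈ Finset.Icc (N+1) n, a i
        = ∑ j ∈ Finset.range (n + 1 - (N+1)), a (j + N + 1) := by
      rw [← Finset.Ico_add_one_right_eq_Icc, Finset.sum_Ico_eq_sum_range]
      exact Finset.sum_congr rfl fun j _ => by rw [show N+1+j = j+N+1 from by omega]
    rw [hre]
    exact Summable.sum_le_tsum _ (fun j _ => (hpos (j + N + 1) (by omega)).le) hsumshift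
  set ε : ℝ := A / (8 * (N + 1)) with hε_def
  have hε : 0 < ε := by positivity
  set b : ℕ → ℝ := fun i => if i ≤ N then ε else 2 / δ * a i with hb_def
  have hbpos : ∀ i, 1 ≤ i → 0 < b i := by
    intro i hi
    by_cases h : i ≤ N <;> simp only [hb_def, h, if_true, if_false]
    · exact hε
    · exact mul_pos (by positivity) (hpos i hi)
  have hbsum : Summable b := by
    refine (summable_nat_add_iff (N+1)).1 ?_
    have heq : (fun i : ℕ => b (i + (N+1))) = fun i => 2 / δ * a (i + N + 1) := by
      funext i
      simp only [hb_def, show ¬ (i + (N+1) ≤ N) by omega, if_false]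
      rw [show i + (N+1) = i + N + 1 from by omega]
    rw [heq]
    exact hsumshift.mul_left _
  have hσn : ∀ n, (∑ i ∈ Finset.Icc 1 n, b i) ≤ 2 * (A/8) := by
    intro n
    rw [← Finset.sum_filter_add_sum_filter_not (Finset.Icc 1 n) (· ≤ N) b]
    have hS1 : ∑ i ∈ (Finset.Icc 1 n).filter (· ≤ N), b i ≤ A/8 := by
      have h1 : ∑ i ∈ (Finset.Icc 1 n).filter (· ≤ N), b i
          = ((Finset.Icc 1 n).filter (· ≤ N)).card * ε := by
        have hval : ∀ i ∈ (Finset.Icc 1 n).filter (· ≤ N), b i = ε := by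
          intro i hi
          have h6 : i ≤ N := by simpa using (Finset.mem_filter.1 hi).2
          simp only [hb_def, h6, if_true]
        rw [Finset.sum_congr rfl hval, Finset.sum_const, nsmul_eq_mul]
      rw [h1]
      have hcard : ((Finset.Icc 1 n).filter (· ≤ N)).card ≤ N := by
        have hsub : (Finset.Icc 1 n).filter (· ≤ N) ⊆ Finset.Icc 1 N := by
          intro i hi
          have h2 := Finset.mem_filter.1 hi
          have h3 := Finset.mem_Icc.1 h2.1
          simp only [Finset.mem_Icc]
          exact ⟨h3.1, by simpa using h2.2⟩
        simpa using Finset.card_le_card hsub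
      calc (((Finset.Icc 1 n).filter (· ≤ N)).card : ℝ) * ε ≤ (N+1) * ε := by
            apply mul_le_mul_of_nonneg_right _ hε.le
            exact_mod_cast Nat.le_succ_of_le hcard
      _ = A/8 := by rw [hε_def]; field_simp
    have hS2 : ∑ i ∈ (Finset.Icc 1 n).filter (¬ · ≤ N), b i ≤ A/8 := by
      have h1 : ∑ i ∈ (Finset.Icc 1 n).filter (¬ · ≤ N), b i
          = 2/δ * ∑ i ∈ (Finset.Icc 1 n).filter (¬ · ≤ N), a i := by
        rw [Finset.mul_sum]
        refine Finset.sum_congr rfl (fun i hi => ?_)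
        have := (Finset.mem_filter.1 hi).2
        simp only [hb_def]
        rw [if_neg (by simpa using this)]
      rw [h1]
      have h2 : ∑ i ∈ (Finset.Icc 1 n).filter (¬ · ≤ N), a i ≤ T0 := by
        refine le_trans (Finset.sum_le_sum_of_subset_of_nonneg ?_ ?_) (htailsum n)
        · intro i hi
          have h3 := Finset.mem_filter.1 hi
          have h4 := Finset.mem_Icc.1 h3.1
          have h5 : ¬ i ≤ N := by simpa using h3.2
          exact Finset.mem_Icc.2 ⟨by omega, h4.2⟩
        · intro i hi _
          exact (hpos i (by have := Finset.mem_Icc.1 hi; omega)).le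
      calc 2/δ * ∑ i ∈ (Finset.Icc 1 n).filter (¬ · ≤ N), a i ≤ 2/δ * T0 := by
            apply mul_le_mul_of_nonneg_left h2 (by positivity)
      _ ≤ 2/δ * (δ * A / 16) := mul_le_mul_of_nonneg_left hN (by positivity)
      _ = A/8 := by field_simp; ring
    linarith
  -- the initial bump
  set c : ℝ := A/4 with hc_def
  have hc : 0 < c := by positivity
  set u0 : ℝ → ℝ := fun x => max 0 (min 1 (2 - |x|/c)) with hu0_def
  have hu0c : Continuous u0 := by
    apply Continuous.max continuous_const
    apply Continuous.min continuous_const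
    fun_prop
  have hu00 : ∀ x, 0 ≤ u0 x := fun x => le_max_left _ _
  have hu01 : ∀ x, u0 x ≤ 1 := fun x => max_le (by norm_num) (min_le_left _ _)
  have hflat : ∀ x, |x| ≤ c → u0 x = 1 := by
    intro x hx
    have h1 : |x|/c ≤ 1 := (div_le_one hc).2 hx
    rw [hu0_def]
    simp only
    rw [min_eq_left (by linarith), max_eq_right (by norm_num)]
  have hsupp : ∀ x, 2*c ≤ |x| → u0 x = 0 := by
    intro x hx
    have h1 : 2 ≤ |x|/c := by rw [le_div_iff₀ hc]; linarith
    rw [hu0_def]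
    simp only
    rw [max_eq_left]
    exact le_trans (min_le_right _ _) (by linarith)
  obtain ⟨φ, hsmooth, hrange, hflat', hflatd, hsupp', hbound⟩ :=
    exists_smooth_aux b hbpos hbsum u0 hu0c hu00 hu01 c (2*c) (A/8)
      (by positivity) (by rw [hc_def]; linarith) hflat hsupp hσn
  -- the constant
  set C : ℝ := ∏ i ∈ Finset.Icc 1 N, max 1 (2 * a i / (δ * ε)) with hC_def
  have hC1 : 1 ≤ C := by
    rw [hC_def]
    exact one_le_prod_real fun i _ => le_max_left _ _
  have hC0 : 0 < C := lt_of_lt_of_le one_pos hC1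
  -- key product estimate
  have hPa : ∀ k, 0 < ∏ i ∈ Finset.Icc 1 k, a i :=
    fun k => Finset.prod_pos fun i hi => hpos i (Finset.mem_Icc.1 hi).1
  have hPb : ∀ k, 0 < ∏ i ∈ Finset.Icc 1 k, b i :=
    fun k => Finset.prod_pos fun i hi => hbpos i (Finset.mem_Icc.1 hi).1
  set m : ℕ → ℝ := fun i => if i ≤ N then max 1 (2 * a i / (δ * ε)) else 1 with hm_def
  have hm1 : ∀ i, 1 ≤ m i := by
    intro i
    by_cases h : i ≤ N <;> simp [hm_def, h]
  have hkey : ∀ k, ∏ i ∈ Finset.Icc 1 k, (2 * a i / (δ * b i)) ≤ C := by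
    intro k
    have hfac : ∀ i ∈ Finset.Icc 1 k, 2 * a i / (δ * b i) ≤ m i := by
      intro i hi
      have hi1 := (Finset.mem_Icc.1 hi).1
      by_cases h : i ≤ N
      · simp only [hm_def, h, if_true, hb_def]
        exact le_max_right _ _
      · simp only [hm_def, h, if_false, hb_def]
        have ha := hpos i hi1
        rw [show δ * (2/δ * a i) = 2 * a i by field_simp]
        rw [div_self (by positivity)]
    have h1 : ∏ i ∈ Finset.Icc 1 k, (2 * a i / (δ * b i)) ≤ ∏ i ∈ Finset.Icc 1 k, m i := by
      apply Finset.prod_le_prod _ hfac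
      intro i hi
      have hi1 := (Finset.mem_Icc.1 hi).1
      have hb1 := hbpos i hi1
      have ha1 := hpos i hi1
      positivity
    have h2 : ∏ i ∈ Finset.Icc 1 k, m i ≤ ∏ i ∈ Finset.Icc 1 (max k N), m i := by
      exact prod_le_prod_subset_real
        (Finset.Icc_subset_Icc le_rfl (le_max_left k N)) (fun i _ => hm1 i)
    have h3 : ∏ i ∈ Finset.Icc 1 (max k N), m i = C := by
      have e1 : Finset.Icc 1 (max k N) = Finset.Ioc 0 (max k N) := by
        rw [← Finset.Icc_add_one_left_eq_Ioc]; rfl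
      have e2 : Finset.Icc 1 N = Finset.Ioc 0 N := by rw [← Finset.Icc_add_one_left_eq_Ioc]; rfl
      rw [e1, ← Finset.prod_Ioc_consecutive m (Nat.zero_le N) (le_max_right k N), ← e2]
      have h4 : ∏ i ∈ Finset.Ioc N (max k N), m i = 1 := by
        apply Finset.prod_eq_one
        intro i hi
        have := (Finset.mem_Ioc.1 hi).1
        simp [hm_def, show ¬ i ≤ N by omega]
      rw [h4, mul_one, hC_def]
      refine Finset.prod_congr rfl fun i hi => ?_
      have := (Finset.mem_Icc.1 hi).2
      simp [hm_def, this]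
    calc ∏ i ∈ Finset.Icc 1 k, (2 * a i / (δ * b i)) ≤ ∏ i ∈ Finset.Icc 1 k, m i := h1
    _ ≤ ∏ i ∈ Finset.Icc 1 (max k N), m i := h2
    _ = C := h3
  have hMb : ∀ k, Mb b k ≤ C * δ ^ k / ∏ i ∈ Finset.Icc 1 k, a i := by
    intro k
    have hratio : ∏ i ∈ Finset.Icc 1 k, (2 * a i / (δ * b i))
        = (2^k * ∏ i ∈ Finset.Icc 1 k, a i) / (δ^k * ∏ i ∈ Finset.Icc 1 k, b i) := by
      rw [Finset.prod_div_distrib, Finset.prod_mul_distrib, Finset.prod_mul_distrib,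
        Finset.prod_const, Finset.prod_const]
      congr 2 <;> rw [Nat.card_Icc, Nat.add_sub_cancel]
    have h5 := hkey k
    have hPbk := hPb k
    rw [hratio, div_le_iff₀ (by positivity)] at h5
    unfold Mb
    rw [div_le_div_iff₀ (hPb k) (hPa k)]
    calc 2^k * ∏ i ∈ Finset.Icc 1 k, a i ≤ C * (δ^k * ∏ i ∈ Finset.Icc 1 k, b i) := h5
    _ = C * δ^k * ∏ i ∈ Finset.Icc 1 k, b i := by ring
  -- assemble
  refine ⟨φ, C, hsmooth, ?_, hC0, ?_, hrange, ?_, ?_, ?_⟩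
  · apply HasCompactSupport.intro (isCompact_Icc (a := -A) (b := A))
    intro x hx
    apply hsupp'
    simp only [Set.mem_Icc, not_and_or, not_le] at hx
    rw [show 2*c + A/8 = 5*A/8 by rw [hc_def]; ring]
    rcases hx with h | h
    · rw [abs_of_neg (by linarith)]; linarith
    · rw [abs_of_pos (by linarith)]; linarith
  · -- tsupport
    apply closure_minimal _ isClosed_Icc
    intro x hx
    rw [Function.mem_support] at hx
    by_contra hmem
    apply hx
    apply hsupp'
    simp only [Set.mem_Icc, not_and_or, not_le] at hmem
    rw [show 2*c + A/8 = 5*A/8 by rw [hc_def]; ring]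
    rcases hmem with h | h
    · rw [abs_of_neg (by linarith)]; linarith
    · rw [abs_of_pos (by linarith)]; linarith
  · apply hflat'
    rw [hc_def]
    rw [abs_zero]
    linarith
  · intro p hp
    apply hflatd p hp
    rw [abs_zero, hc_def]
    linarith
  · intro k x
    exact (hbound k x).trans (hMb k)
end

section
/- Let -∞ < T₁ < T₂ < ∞ and 1 < σ < s. Let f, g : ℝ → ℝ be infinitely differentiable on [T₁,T₂] and assume there are constants C, C', R, ρ > 0 such that |f^{(n)}(t)| ≤ C (n!)^s / R^n and |g^{(n)}(t)| ≤ C' (n!)^σ / ρ^n for all n ∈ ℕ and all t ∈ [T₁,T₂]. Then there exists a constant C'' > 0 such that |(fg)^{(n)}(t)| ≤ C'' (n!)^s / R^n for all n ∈ ℕ and all t ∈ [T₁,T₂] (i.e., the product fg is Gevrey of order s on [T₁,T₂] with the same constant R as f). -/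
open Set Finset

lemma aux_geom (ε x : ℝ) (hε : 0 < ε) (hx : 0 < x) :
    ∃ K : ℝ, 0 < K ∧ ∀ j : ℕ, x ^ j * 2 ^ j ≤ K * (j.factorial : ℝ) ^ ε := by
  set M : ℝ := (2 * x) ^ ε⁻¹ with hMdef
  have h2x : (0:ℝ) < 2 * x := by linarith
  have hM : 0 < M := Real.rpow_pos_of_pos h2x _
  refine ⟨Real.exp (M * ε), Real.exp_pos _, fun j => ?_⟩
  have hfac : (0:ℝ) < (j.factorial : ℝ) := by positivity
  have h1 : M ^ j / (j.factorial : ℝ) ≤ Real.exp M := by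
    calc M ^ j / (j.factorial : ℝ)
        ≤ ∑ i ∈ range (j+1), M ^ i / (i.factorial : ℝ) := by
          refine Finset.single_le_sum (f := fun i => M ^ i / (i.factorial : ℝ))
            (fun i _ => by positivity) (Finset.self_mem_range_succ j)
      _ ≤ Real.exp M := Real.sum_le_exp_of_nonneg hM.le _
  have h2 : M ^ j ≤ Real.exp M * (j.factorial : ℝ) := by
    rw [div_le_iff₀ hfac] at h1; linarith
  have h3 : (M ^ j) ^ ε ≤ (Real.exp M * (j.factorial : ℝ)) ^ ε :=
    Real.rpow_le_rpow (by positivity) h2 hε.le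
  have h4 : (M ^ j) ^ ε = (2 * x) ^ j := by
    rw [← Real.rpow_natCast M j, ← Real.rpow_mul hM.le, mul_comm, Real.rpow_mul hM.le,
      hMdef, Real.rpow_inv_rpow h2x.le hε.ne', Real.rpow_natCast]
  have h5 : (Real.exp M * (j.factorial : ℝ)) ^ ε
      = Real.exp (M * ε) * (j.factorial : ℝ) ^ ε := by
    rw [Real.mul_rpow (Real.exp_pos _).le hfac.le, ← Real.exp_mul]
  rw [h4, h5] at h3
  calc x ^ j * 2 ^ j = (2 * x) ^ j := by rw [mul_pow]; ring
    _ ≤ _ := h3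

lemma aux_term (s σ : ℝ) (hσ : 1 < σ) (hs : σ < s) (x K : ℝ) (hx : 0 < x) (hK : 0 < K)
    (hKb : ∀ j : ℕ, x ^ j * 2 ^ j ≤ K * (j.factorial : ℝ) ^ (s - σ))
    (n i : ℕ) (hi : i ≤ n) :
    (n.choose i : ℝ) * (i.factorial : ℝ) ^ s * (((n - i).factorial : ℝ)) ^ σ * x ^ (n - i)
      ≤ K / 2 ^ (n - i) * (n.factorial : ℝ) ^ s := by
  set j := n - i with hj
  set a : ℝ := (i.factorial : ℝ) with hadef
  set b : ℝ := (j.factorial : ℝ) with hbdef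
  set c : ℝ := (n.factorial : ℝ) with hcdef
  set m : ℝ := (n.choose i : ℝ) with hmdef
  have ha : (0:ℝ) < a := by positivity
  have hb : (0:ℝ) < b := by positivity
  have hc : (0:ℝ) < c := by positivity
  have hm : (1:ℝ) ≤ m := by
    rw [hmdef]; exact_mod_cast Nat.succ_le_of_lt (Nat.choose_pos hi)
  have hnn : m * a * b = c := by
    rw [hmdef, hadef, hbdef, hcdef]
    exact_mod_cast congrArg (Nat.cast : ℕ → ℝ)
      (Nat.choose_mul_factorial_mul_factorial hi)
  have hle : a * b ≤ c := by nlinarith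
  have has : a ^ s = a * a ^ (s - 1) := by
    have h := Real.rpow_add ha 1 (s - 1)
    rw [Real.rpow_one] at h
    rw [← h]; norm_num
  have hbs : b ^ σ = b * b ^ (σ - 1) := by
    have h := Real.rpow_add hb 1 (σ - 1)
    rw [Real.rpow_one] at h
    rw [← h]; norm_num
  have hcs : c ^ s = c * c ^ (s - 1) := by
    have h := Real.rpow_add hc 1 (s - 1)
    rw [Real.rpow_one] at h
    rw [← h]; norm_num
  have hbsplit : b ^ (s - 1) = b ^ (σ - 1) * b ^ (s - σ) := by
    have h := Real.rpow_add hb (σ - 1) (s - σ)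
    rw [← h]; ring_nf
  have hxb : x ^ j ≤ K * b ^ (s - σ) / 2 ^ j := by
    rw [le_div_iff₀ (by positivity)]; exact hKb j
  calc m * a ^ s * b ^ σ * x ^ j
      = c * (a ^ (s-1) * b ^ (σ-1)) * x ^ j := by rw [has, hbs, ← hnn]; ring
    _ ≤ c * (a ^ (s-1) * b ^ (σ-1)) * (K * b ^ (s - σ) / 2 ^ j) := by
        exact mul_le_mul_of_nonneg_left hxb (by positivity)
    _ = K / 2 ^ j * (c * (a ^ (s-1) * b ^ (s-1))) := by rw [hbsplit]; ring
    _ = K / 2 ^ j * (c * (a * b) ^ (s-1)) := by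
        rw [Real.mul_rpow ha.le hb.le]
    _ ≤ K / 2 ^ j * (c * c ^ (s-1)) := by
        have h := Real.rpow_le_rpow (by positivity : (0:ℝ) ≤ a * b) hle
          (by linarith : (0:ℝ) ≤ s - 1)
        exact mul_le_mul_of_nonneg_left
          (mul_le_mul_of_nonneg_left h hc.le) (by positivity)
    _ = K / 2 ^ j * c ^ s := by rw [hcs]

/-- Product of a Gevrey-s function and a Gevrey-σ function (1 < σ < s) is
Gevrey-s with the same radius R. -/
theorem stmt_13 (T₁ T₂ : ℝ) (hT : T₁ < T₂) (σ s : ℝ) (hσ : 1 < σ) (hs : σ < s)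
    (f g : ℝ → ℝ)
    (hf : ContDiffOn ℝ (⊤ : ℕ∞) f (Icc T₁ T₂))
    (hg : ContDiffOn ℝ (⊤ : ℕ∞) g (Icc T₁ T₂))
    (C C' R ρ : ℝ) (hC : 0 < C) (hC' : 0 < C') (hR : 0 < R) (hρ : 0 < ρ)
    (hfb : ∀ n : ℕ, ∀ t ∈ Icc T₁ T₂,
      |iteratedDerivWithin n f (Icc T₁ T₂) t| ≤ C * (n.factorial : ℝ) ^ s / R ^ n)
    (hgb : ∀ n : ℕ, ∀ t ∈ Icc T₁ T₂,
      |iteratedDerivWithin n g (Icc T₁ T₂) t| ≤ C' * (n.factorial : ℝ) ^ σ / ρ ^ n) :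
    ∃ C'' : ℝ, 0 < C'' ∧ ∀ n : ℕ, ∀ t ∈ Icc T₁ T₂,
      |iteratedDerivWithin n (fun u => f u * g u) (Icc T₁ T₂) t|
        ≤ C'' * (n.factorial : ℝ) ^ s / R ^ n := by
  have hUD : UniqueDiffOn ℝ (Icc T₁ T₂) := uniqueDiffOn_Icc hT
  set x : ℝ := R / ρ with hxdef
  have hx : 0 < x := by positivity
  obtain ⟨K, hK, hKb⟩ := aux_geom (s - σ) x (by linarith) hx
  refine ⟨C * C' * (2 * K), by positivity, fun n t ht => ?_⟩
  have hn : (n : WithTop ℕ∞) ≤ ((⊤ : ℕ∞) : WithTop ℕ∞) := by exact_mod_cast le_top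
  have hLeib := norm_iteratedFDerivWithin_mul_le hf hg hUD ht hn
  simp only [norm_iteratedFDerivWithin_eq_norm_iteratedDerivWithin, Real.norm_eq_abs] at hLeib
  calc |iteratedDerivWithin n (fun u => f u * g u) (Icc T₁ T₂) t|
      ≤ ∑ i ∈ range (n + 1), (n.choose i : ℝ) *
          |iteratedDerivWithin i f (Icc T₁ T₂) t| *
          |iteratedDerivWithin (n - i) g (Icc T₁ T₂) t| := hLeib
    _ ≤ ∑ i ∈ range (n + 1), (n.choose i : ℝ) *
          (C * (i.factorial : ℝ) ^ s / R ^ i) *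
          (C' * (((n - i).factorial : ℝ)) ^ σ / ρ ^ (n - i)) := by
        refine Finset.sum_le_sum fun i _ => ?_
        gcongr
        · exact hfb i t ht
        · exact hgb (n - i) t ht
    _ = ∑ i ∈ range (n + 1), C * C' *
          ((n.choose i : ℝ) * (i.factorial : ℝ) ^ s * (((n - i).factorial : ℝ)) ^ σ
            * x ^ (n - i)) / R ^ n := by
        refine Finset.sum_congr rfl fun i hi => ?_
        have hile : i ≤ n := Nat.lt_succ_iff.mp (Finset.mem_range.mp hi)
        have hin : i + (n - i) = n := Nat.add_sub_cancel' hile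
        rw [hxdef, div_pow, ← hin, pow_add]
        simp only [Nat.add_sub_cancel_left]
        field_simp
    _ ≤ ∑ i ∈ range (n + 1), C * C' *
          (K / 2 ^ (n - i) * (n.factorial : ℝ) ^ s) / R ^ n := by
        refine Finset.sum_le_sum fun i hi => ?_
        have hile : i ≤ n := Nat.lt_succ_iff.mp (Finset.mem_range.mp hi)
        gcongr C * C' * ?_ / R ^ n
        exact aux_term s σ hσ hs x K hx hK hKb n i hile
    _ = C * C' * K * (n.factorial : ℝ) ^ s / R ^ n *
          ∑ i ∈ range (n + 1), (1 / 2 : ℝ) ^ (n - i) := by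
        rw [Finset.mul_sum]
        refine Finset.sum_congr rfl fun i _ => ?_
        rw [one_div, inv_pow]
        field_simp
    _ ≤ C * C' * K * (n.factorial : ℝ) ^ s / R ^ n * 2 := by
        have hsum : ∑ i ∈ range (n + 1), (1 / 2 : ℝ) ^ (n - i) ≤ 2 := by
          have hrefl := Finset.sum_range_reflect (fun j => (1 / 2 : ℝ) ^ j) (n + 1)
          simp only [Nat.add_sub_cancel] at hrefl
          rw [hrefl]
          exact sum_geometric_two_le _
        exact mul_le_mul_of_nonneg_left hsum (by positivity)
    _ = C * C' * (2 * K) * (n.factorial : ℝ) ^ s / R ^ n := by ring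
end
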